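/- Cartesian wedge product of difference chains multiplies norms: if D is an i-difference k-chain in U₁ ⊆ ℝⁿ and E is a j-difference ℓ-chain in U₂ ⊆ ℝᵐ, then D × E is an (i+j)-difference (k+ℓ)-chain in U₁ × U₂ with ‖D × E‖_{B^{i+j}, U₁×U₂} ≤ |D|_{B^{i},U₁} · |E|_{B^{j},U₂}. Consequently, for Dirac chains P and Q, ‖P × Q‖_{B^{r+s}, U₁×U₂} ≤ ‖P‖_{B^r,U₁} · ‖Q‖_{B^s,U₂}. -/

import Mathlib

noncomputable section

open Finsupp Filter

variable {E W : Type*} [NormedAddCommGroup E] [NormedSpace ℝ E]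
  [NormedAddCommGroup W] [NormedSpace ℝ W]

/-- Translation of a Dirac chain through the vector `u`. -/
def transl (u : E) (A : E →₀ W) : E →₀ W := Finsupp.mapDomain (· + u) A

/-- The difference operator `Δ_u = T_u - I`. -/
def del (u : E) (A : E →₀ W) : E →₀ W := transl u A - A

/-- Iterated difference chain along a list of vectors. -/
def diff : List E → (E →₀ W) → (E →₀ W)
  | [], A => A
  | u :: σ, A => del u (diff σ A)

/-- The product of the norms of the vectors in the list `σ`. -/
def lnorm (σ : List E) : ℝ := (σ.map norm).prod

/-- Costs of representations of `A` as sums of `j`-difference chains with `j ≤ r`. -/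
def reps (r : ℕ) (A : E →₀ W) : Set ℝ :=
  {c | ∃ (m : ℕ) (σ : Fin m → List E) (p : Fin m → E) (α : Fin m → W),
      (∀ i, (σ i).length ≤ r) ∧
      A = ∑ i, diff (σ i) (Finsupp.single (p i) (α i)) ∧
      c = ∑ i, lnorm (σ i) * ‖α i‖}

/-- The `B^r` norm of a Dirac chain. -/
def Bnorm (r : ℕ) (A : E →₀ W) : ℝ := sInf (reps r A)

/-- `M` is a `B^r`-bound for the cochain (differential form) `ω`. -/
def IsFormBound (r : ℕ) (ω : (E →₀ W) →ₗ[ℝ] ℝ) (M : ℝ) : Prop :=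
  ∀ (σ : List E) (p : E) (α : W), σ.length ≤ r →
    |ω (diff σ (Finsupp.single p α))| ≤ M * lnorm σ * ‖α‖

/-- The `B^r` norm of a differential form. -/
def formNorm (r : ℕ) (ω : (E →₀ W) →ₗ[ℝ] ℝ) : ℝ :=
  sInf {M | 0 ≤ M ∧ IsFormBound r ω M}

/-- The support points of the difference chain `Δ_σ(p;·)`. -/
def dpts : List E → E → Set E
  | [], p => {p}
  | u :: σ, p => dpts σ p ∪ dpts σ (p + u)

/-- A difference chain is *inside* `U` when the convex hull of its support points is
contained in `U`. -/
def Inside (U : Set E) (σ : List E) (p : E) : Prop :=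
  convexHull ℝ (dpts σ p) ⊆ U

/-- Costs of representations of `A` by difference chains of order `≤ r` inside `U`. -/
def repsIn (U : Set E) (r : ℕ) (A : E →₀ W) : Set ℝ :=
  {c | ∃ (m : ℕ) (σ : Fin m → List E) (p : Fin m → E) (α : Fin m → W),
      (∀ i, (σ i).length ≤ r) ∧ (∀ i, Inside U (σ i) (p i)) ∧
      A = ∑ i, diff (σ i) (Finsupp.single (p i) (α i)) ∧
      c = ∑ i, lnorm (σ i) * ‖α i‖}

/-- The `B^{r,U}` norm of a Dirac chain in the open set `U`. -/
def BnormIn (U : Set E) (r : ℕ) (A : E →₀ W) : ℝ := sInf (repsIn U r A)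

/-- Cartesian wedge product of Dirac chains, relative to a wedge product `w` of the
coefficient spaces. -/
def cross {E₁ E₂ W₁ W₂ W₃ : Type*} [AddCommGroup W₁] [Module ℝ W₁]
    [AddCommGroup W₂] [Module ℝ W₂] [AddCommGroup W₃] [Module ℝ W₃]
    (w : W₁ →ₗ[ℝ] W₂ →ₗ[ℝ] W₃) (A : E₁ →₀ W₁) (B : E₂ →₀ W₂) : (E₁ × E₂) →₀ W₃ :=
  A.sum fun p α => B.sum fun q β => Finsupp.single (p, q) (w α β)

open Pointwise in
lemma le_sInf_mul_sInf {S T : Set ℝ} {X : ℝ} (hS : S.Nonempty) (hT : T.Nonempty)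
    (hS0 : ∀ c ∈ S, 0 ≤ c) (hT0 : ∀ d ∈ T, 0 ≤ d)
    (h : ∀ c ∈ S, ∀ d ∈ T, X ≤ c * d) : X ≤ sInf S * sInf T := by
  have ha : 0 ≤ sInf S := le_csInf hS hS0
  have step1 : ∀ d ∈ T, X ≤ sInf S * d := by
    intro d hd
    have hd0 := hT0 d hd
    have h2 : X ≤ sInf (d • S) := by
      apply le_csInf (hS.smul_set)
      rintro y ⟨c, hc, rfl⟩
      simpa [smul_eq_mul, mul_comm c d] using h c hc d hd
    rwa [Real.sInf_smul_of_nonneg hd0, smul_eq_mul, mul_comm] at h2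
  have h3 : X ≤ sInf (sInf S • T) := by
    apply le_csInf (hT.smul_set)
    rintro y ⟨d, hd, rfl⟩
    simpa [smul_eq_mul] using step1 d hd
  rwa [Real.sInf_smul_of_nonneg ha, smul_eq_mul] at h3

section Aux

variable {E₁ E₂ : Type*} {W₁ W₂ W₃ : Type*}
  [NormedAddCommGroup E₁] [NormedSpace ℝ E₁] [NormedAddCommGroup E₂] [NormedSpace ℝ E₂]
  [NormedAddCommGroup W₁] [NormedSpace ℝ W₁]
  [NormedAddCommGroup W₂] [NormedSpace ℝ W₂]
  [NormedAddCommGroup W₃] [NormedSpace ℝ W₃]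
  (w : W₁ →ₗ[ℝ] W₂ →ₗ[ℝ] W₃)

lemma cross_single_left (p : E₁) (α : W₁) (B : E₂ →₀ W₂) :
    cross w (Finsupp.single p α) B = B.sum fun q β => Finsupp.single (p, q) (w α β) := by
  unfold cross
  apply Finsupp.sum_single_index
  simp

lemma cross_single_right (A : E₁ →₀ W₁) (q : E₂) (β : W₂) :
    cross w A (Finsupp.single q β) = A.sum fun p α => Finsupp.single (p, q) (w α β) := by
  unfold cross
  apply Finsupp.sum_congr
  intro p _
  apply Finsupp.sum_single_index
  simp

lemma cross_single_single (p : E₁) (α : W₁) (q : E₂) (β : W₂) :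
    cross w (Finsupp.single p α) (Finsupp.single q β) =
      Finsupp.single (p, q) (w α β) := by
  rw [cross_single_left]
  apply Finsupp.sum_single_index
  simp

lemma cross_zero_left (B : E₂ →₀ W₂) : cross w (0 : E₁ →₀ W₁) B = 0 := by
  simp [cross]

lemma cross_add_left (A A' : E₁ →₀ W₁) (B : E₂ →₀ W₂) :
    cross w (A + A') B = cross w A B + cross w A' B := by
  unfold cross
  apply Finsupp.sum_add_index' <;> intros <;>
    simp [map_add, Finsupp.single_add, Finsupp.sum_add]

lemma cross_zero_right (A : E₁ →₀ W₁) : cross w A (0 : E₂ →₀ W₂) = 0 := by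
  simp [cross]

lemma cross_add_right (A : E₁ →₀ W₁) (B B' : E₂ →₀ W₂) :
    cross w A (B + B') = cross w A B + cross w A B' := by
  unfold cross
  rw [← Finsupp.sum_add]
  apply Finsupp.sum_congr
  intro p _
  apply Finsupp.sum_add_index' <;> intros <;>
    simp [map_add, Finsupp.single_add]

/-- `cross w · B` as an additive monoid hom. -/
def crossLHom (B : E₂ →₀ W₂) : (E₁ →₀ W₁) →+ ((E₁ × E₂) →₀ W₃) :=
  AddMonoidHom.mk' (fun A => cross w A B) (fun A A' => cross_add_left w A A' B)

/-- `cross w A ·` as an additive monoid hom. -/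
def crossRHom (A : E₁ →₀ W₁) : (E₂ →₀ W₂) →+ ((E₁ × E₂) →₀ W₃) :=
  AddMonoidHom.mk' (fun B => cross w A B) (fun B B' => cross_add_right w A B B')

lemma cross_sub_left (A A' : E₁ →₀ W₁) (B : E₂ →₀ W₂) :
    cross w (A - A') B = cross w A B - cross w A' B :=
  map_sub (crossLHom w B) A A'

lemma cross_sub_right (A : E₁ →₀ W₁) (B B' : E₂ →₀ W₂) :
    cross w A (B - B') = cross w A B - cross w A B' :=
  map_sub (crossRHom w A) B B'

lemma cross_sum_left {ι : Type*} (s : Finset ι) (A : ι → (E₁ →₀ W₁)) (B : E₂ →₀ W₂) :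
    cross w (∑ i ∈ s, A i) B = ∑ i ∈ s, cross w (A i) B :=
  map_sum (crossLHom w B) A s

lemma cross_sum_right {ι : Type*} (A : E₁ →₀ W₁) (s : Finset ι) (B : ι → (E₂ →₀ W₂)) :
    cross w A (∑ i ∈ s, B i) = ∑ i ∈ s, cross w A (B i) :=
  map_sum (crossRHom w A) B s

lemma transl_single' {E V : Type*} [NormedAddCommGroup E] [NormedSpace ℝ E]
    [NormedAddCommGroup V] [NormedSpace ℝ V] (u : E) (p : E) (α : V) :
    transl u (Finsupp.single p α) = Finsupp.single (p + u) α :=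
  Finsupp.mapDomain_single

lemma transl_add' {E V : Type*} [NormedAddCommGroup E] [NormedSpace ℝ E]
    [NormedAddCommGroup V] [NormedSpace ℝ V] (u : E) (A A' : E →₀ V) :
    transl u (A + A') = transl u A + transl u A' :=
  Finsupp.mapDomain_add

lemma transl_finsupp_sum {E V : Type*} [NormedAddCommGroup E] [NormedSpace ℝ E]
    [NormedAddCommGroup V] [NormedSpace ℝ V] {β N : Type*} [Zero N] (u : E)
    (B : β →₀ N) (g : β → N → (E →₀ V)) :
    transl u (B.sum g) = B.sum fun b n => transl u (g b n) :=
  map_finsuppSum (Finsupp.mapDomain.addMonoidHom (· + u)) B g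

lemma cross_transl_left (u : E₁) (A : E₁ →₀ W₁) (B : E₂ →₀ W₂) :
    cross w (transl u A) B = transl (u, (0 : E₂)) (cross w A B) := by
  induction A using Finsupp.induction_linear with
  | zero => simp [transl, cross_zero_left]
  | add A A' hA hA' => rw [transl_add', cross_add_left, hA, hA', cross_add_left, transl_add']
  | single p α =>
    rw [transl_single', cross_single_left, cross_single_left, transl_finsupp_sum]
    apply Finsupp.sum_congr
    intro q _
    rw [transl_single']
    simp [Prod.mk_add_mk]

lemma cross_transl_right (v : E₂) (A : E₁ →₀ W₁) (B : E₂ →₀ W₂) :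
    cross w A (transl v B) = transl ((0 : E₁), v) (cross w A B) := by
  induction B using Finsupp.induction_linear with
  | zero => simp [transl, cross_zero_right]
  | add B B' hB hB' => rw [transl_add', cross_add_right, hB, hB', cross_add_right, transl_add']
  | single q β =>
    rw [transl_single', cross_single_right, cross_single_right, transl_finsupp_sum]
    apply Finsupp.sum_congr
    intro p _
    rw [transl_single']
    simp [Prod.mk_add_mk]

lemma cross_del_left (u : E₁) (A : E₁ →₀ W₁) (B : E₂ →₀ W₂) :
    cross w (del u A) B = del (u, (0 : E₂)) (cross w A B) := by
  unfold del
  rw [cross_sub_left, cross_transl_left]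

lemma cross_del_right (v : E₂) (A : E₁ →₀ W₁) (B : E₂ →₀ W₂) :
    cross w A (del v B) = del ((0 : E₁), v) (cross w A B) := by
  unfold del
  rw [cross_sub_right, cross_transl_right]

lemma cross_diff_left (σ : List E₁) (A : E₁ →₀ W₁) (B : E₂ →₀ W₂) :
    cross w (diff σ A) B = diff (σ.map fun u => (u, (0 : E₂))) (cross w A B) := by
  induction σ with
  | nil => rfl
  | cons u σ ih => simp only [diff, List.map_cons, cross_del_left, ih]

lemma cross_diff_right (τ : List E₂) (A : E₁ →₀ W₁) (B : E₂ →₀ W₂) :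
    cross w A (diff τ B) = diff (τ.map fun v => ((0 : E₁), v)) (cross w A B) := by
  induction τ with
  | nil => rfl
  | cons v τ ih => simp only [diff, List.map_cons, cross_del_right, ih]

lemma diff_append {E V : Type*} [NormedAddCommGroup E] [NormedSpace ℝ E]
    [NormedAddCommGroup V] [NormedSpace ℝ V] (l₁ l₂ : List E) (A : E →₀ V) :
    diff (l₁ ++ l₂) A = diff l₁ (diff l₂ A) := by
  induction l₁ with
  | nil => rfl
  | cons u l₁ ih =>
    simp only [List.cons_append, diff]
    exact congrArg _ ih

lemma cross_diff_diff (σ : List E₁) (p : E₁) (α : W₁) (τ : List E₂) (q : E₂) (β : W₂) :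
    cross w (diff σ (Finsupp.single p α)) (diff τ (Finsupp.single q β)) =
      diff ((σ.map fun u => (u, (0 : E₂))) ++ (τ.map fun v => ((0 : E₁), v)))
        (Finsupp.single (p, q) (w α β)) := by
  rw [cross_diff_left, cross_diff_right, cross_single_single, diff_append]

lemma dpts_cons {E : Type*} [NormedAddCommGroup E] [NormedSpace ℝ E]
    (x : E) (l : List E) (p : E) : dpts (x :: l) p = dpts l p ∪ dpts l (p + x) := rfl

lemma dpts_map_inr (τ : List E₂) (p : E₁) (q : E₂) :
    dpts (τ.map fun v => ((0 : E₁), v)) (p, q) = {p} ×ˢ dpts τ q := by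
  induction τ generalizing q with
  | nil => simp [dpts]
  | cons v τ ih =>
    simp only [List.map_cons, dpts, ih, Prod.mk_add_mk, add_zero]
    rw [← Set.prod_union]

lemma dpts_cross (σ : List E₁) (τ : List E₂) (p : E₁) (q : E₂) :
    dpts ((σ.map fun u => (u, (0 : E₂))) ++ (τ.map fun v => ((0 : E₁), v))) (p, q) =
      dpts σ p ×ˢ dpts τ q := by
  induction σ generalizing p with
  | nil => exact dpts_map_inr τ p q
  | cons u σ ih =>
    rw [List.map_cons, List.cons_append, dpts_cons]
    simp only [Prod.mk_add_mk, add_zero]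
    rw [ih p, ih (p + u), dpts_cons, Set.union_prod]

end Aux

section Lnorm

variable {E F : Type*} [NormedAddCommGroup E] [NormedAddCommGroup F]

lemma lnorm_nil : lnorm ([] : List E) = 1 := rfl

lemma lnorm_cons (u : E) (σ : List E) : lnorm (u :: σ) = ‖u‖ * lnorm σ := by simp [lnorm]

lemma lnorm_nonneg (σ : List E) : 0 ≤ lnorm σ := by
  induction σ with
  | nil => norm_num [lnorm_nil]
  | cons u σ ih => rw [lnorm_cons]; positivity

lemma lnorm_append (l₁ l₂ : List E) : lnorm (l₁ ++ l₂) = lnorm l₁ * lnorm l₂ := by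
  simp [lnorm]

lemma lnorm_map_inl (σ : List E) : lnorm (σ.map fun u => (u, (0 : F))) = lnorm σ := by
  unfold lnorm
  rw [List.map_map]
  congr 1
  apply List.map_congr_left
  intro u _
  simp [Prod.norm_def]

lemma lnorm_map_inr (τ : List F) : lnorm (τ.map fun v => ((0 : E), v)) = lnorm τ := by
  unfold lnorm
  rw [List.map_map]
  congr 1
  apply List.map_congr_left
  intro v _
  simp [Prod.norm_def]

end Lnorm

section BnormInAux

variable {E W : Type*} [NormedAddCommGroup E] [NormedSpace ℝ E]
  [NormedAddCommGroup W] [NormedSpace ℝ W]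

lemma repsIn_nonneg {U : Set E} {r : ℕ} {A : E →₀ W} {c : ℝ} (hc : c ∈ repsIn U r A) :
    0 ≤ c := by
  obtain ⟨m, σ, p, α, -, -, -, rfl⟩ := hc
  exact Finset.sum_nonneg fun i _ => mul_nonneg (lnorm_nonneg _) (norm_nonneg _)

lemma bddBelow_repsIn (U : Set E) (r : ℕ) (A : E →₀ W) : BddBelow (repsIn U r A) :=
  ⟨0, fun _ hc => repsIn_nonneg hc⟩

lemma BnormIn_le {U : Set E} {r : ℕ} {A : E →₀ W} {c : ℝ} (hc : c ∈ repsIn U r A) :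
    BnormIn U r A ≤ c :=
  csInf_le (bddBelow_repsIn U r A) hc

lemma mem_repsIn_single {U : Set E} {r : ℕ} (ρ : List E) (P₀ : E) (γ : W)
    (hlen : ρ.length ≤ r) (hin : Inside U ρ P₀) :
    lnorm ρ * ‖γ‖ ∈ repsIn U r (diff ρ (Finsupp.single P₀ γ)) := by
  refine ⟨1, fun _ => ρ, fun _ => P₀, fun _ => γ, fun _ => hlen, fun _ => hin, ?_, ?_⟩ <;>
    simp

lemma repsIn_nonempty {U : Set E} (r : ℕ) {P : E →₀ W} (hP : ∀ p ∈ P.support, p ∈ U) :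
    (repsIn U r P).Nonempty := by
  classical
  refine ⟨_, P.support.card, fun _ => [], fun i => (P.support.equivFin.symm i : E),
    fun i => P ((P.support.equivFin.symm i : E)), fun _ => by simp, ?_, ?_, rfl⟩
  · intro i
    unfold Inside
    rw [show dpts ([] : List E) ((P.support.equivFin.symm i : E)) = {(P.support.equivFin.symm i : E)} from rfl,
      convexHull_singleton, Set.singleton_subset_iff]
    exact hP _ (P.support.equivFin.symm i).2
  · show P = ∑ i : Fin P.support.card, Finsupp.single ((P.support.equivFin.symm i : E))
      (P ((P.support.equivFin.symm i : E)))
    rw [Equiv.sum_comp P.support.equivFin.symm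
      (fun x : {x // x ∈ P.support} => Finsupp.single (x : E) (P x))]
    rw [Finset.sum_coe_sort P.support (fun x => Finsupp.single x (P x))]
    exact (Finsupp.sum_single P).symm

end BnormInAux


/-- Cartesian wedge product of difference chains multiplies norms: an
`i`-difference `k`-chain `D` in `U₁ ⊆ ℝⁿ` crossed with a `j`-difference `ℓ`-chain `E` in
`U₂ ⊆ ℝᵐ` is an `(i+j)`-difference `(k+ℓ)`-chain in `U₁ × U₂` with
`‖D × E‖_{B^{i+j},U₁×U₂} ≤ |D|_{B^i,U₁}·|E|_{B^j,U₂}`; consequently for Dirac chains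
`P` in `U₁` and `Q` in `U₂`, `‖P × Q‖_{B^{r+s},U₁×U₂} ≤ ‖P‖_{B^r,U₁}·‖Q‖_{B^s,U₂}`. -/
theorem cross_Bnorm_le {n m : ℕ} {W₁ W₂ W₃ : Type*}
    [NormedAddCommGroup W₁] [NormedSpace ℝ W₁]
    [NormedAddCommGroup W₂] [NormedSpace ℝ W₂]
    [NormedAddCommGroup W₃] [NormedSpace ℝ W₃]
    (w : W₁ →ₗ[ℝ] W₂ →ₗ[ℝ] W₃) (hw : ∀ α β, ‖w α β‖ ≤ ‖α‖ * ‖β‖)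
    (U₁ : Set (EuclideanSpace ℝ (Fin n))) (U₂ : Set (EuclideanSpace ℝ (Fin m))) :
    (∀ (σ : List (EuclideanSpace ℝ (Fin n))) (p : EuclideanSpace ℝ (Fin n)) (α : W₁)
       (τ : List (EuclideanSpace ℝ (Fin m))) (q : EuclideanSpace ℝ (Fin m)) (β : W₂),
       Inside U₁ σ p → Inside U₂ τ q →
       (∃ ρ : List (EuclideanSpace ℝ (Fin n) × EuclideanSpace ℝ (Fin m)),
          ρ.length = σ.length + τ.length ∧ Inside (U₁ ×ˢ U₂) ρ (p, q) ∧
          cross w (diff σ (Finsupp.single p α)) (diff τ (Finsupp.single q β)) =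
            diff ρ (Finsupp.single (p, q) (w α β))) ∧
       BnormIn (U₁ ×ˢ U₂) (σ.length + τ.length)
           (cross w (diff σ (Finsupp.single p α)) (diff τ (Finsupp.single q β))) ≤
         (lnorm σ * ‖α‖) * (lnorm τ * ‖β‖)) ∧
    (∀ (r s : ℕ) (P : (EuclideanSpace ℝ (Fin n)) →₀ W₁)
       (Q : (EuclideanSpace ℝ (Fin m)) →₀ W₂),
       (∀ p ∈ P.support, p ∈ U₁) → (∀ q ∈ Q.support, q ∈ U₂) →
       BnormIn (U₁ ×ˢ U₂) (r + s) (cross w P Q) ≤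
         BnormIn U₁ r P * BnormIn U₂ s Q) := by
  classical
  constructor
  · intro σ p α τ q β h₁ h₂
    have hlen : ((σ.map fun u => (u, (0 : EuclideanSpace ℝ (Fin m)))) ++
        (τ.map fun v => ((0 : EuclideanSpace ℝ (Fin n)), v))).length
          = σ.length + τ.length := by simp
    have hin : Inside (U₁ ×ˢ U₂) ((σ.map fun u => (u, (0 : EuclideanSpace ℝ (Fin m)))) ++
        (τ.map fun v => ((0 : EuclideanSpace ℝ (Fin n)), v))) (p, q) := by
      unfold Inside
      rw [dpts_cross, convexHull_prod]
      exact Set.prod_mono h₁ h₂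
    have heq := cross_diff_diff w σ p α τ q β
    refine ⟨⟨_, hlen, hin, heq⟩, ?_⟩
    rw [heq]
    refine le_trans (BnormIn_le (mem_repsIn_single _ (p, q) (w α β) (le_of_eq hlen) hin)) ?_
    rw [lnorm_append, lnorm_map_inl, lnorm_map_inr]
    calc lnorm σ * lnorm τ * ‖w α β‖
        ≤ lnorm σ * lnorm τ * (‖α‖ * ‖β‖) :=
          mul_le_mul_of_nonneg_left (hw α β)
            (mul_nonneg (lnorm_nonneg σ) (lnorm_nonneg τ))
      _ = (lnorm σ * ‖α‖) * (lnorm τ * ‖β‖) := by ring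
  · intro r s P Q hP hQ
    apply le_sInf_mul_sInf (repsIn_nonempty r hP) (repsIn_nonempty s hQ)
      (fun c hc => repsIn_nonneg hc) (fun d hd => repsIn_nonneg hd)
    rintro c ⟨m₁, σ, p, α, hlen₁, hin₁, hrep₁, rfl⟩ d ⟨m₂, τ, q, β, hlen₂, hin₂, hrep₂, rfl⟩
    set e := (finProdFinEquiv : Fin m₁ × Fin m₂ ≃ Fin (m₁ * m₂)) with he
    have hcross : cross w P Q = ∑ k : Fin (m₁ * m₂),
        diff (((σ (e.symm k).1).map fun u => (u, (0 : EuclideanSpace ℝ (Fin m)))) ++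
          ((τ (e.symm k).2).map fun v => ((0 : EuclideanSpace ℝ (Fin n)), v)))
          (Finsupp.single (p (e.symm k).1, q (e.symm k).2)
            (w (α (e.symm k).1) (β (e.symm k).2))) := by
      rw [Equiv.sum_comp e.symm (fun ij : Fin m₁ × Fin m₂ =>
        diff (((σ ij.1).map fun u => (u, (0 : EuclideanSpace ℝ (Fin m)))) ++
          ((τ ij.2).map fun v => ((0 : EuclideanSpace ℝ (Fin n)), v)))
          (Finsupp.single (p ij.1, q ij.2) (w (α ij.1) (β ij.2))))]
      rw [Fintype.sum_prod_type, hrep₁, hrep₂, cross_sum_left w]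
      refine Finset.sum_congr rfl fun i _ => ?_
      rw [cross_sum_right w]
      exact Finset.sum_congr rfl fun j _ => cross_diff_diff w _ _ _ _ _ _
    have hmem : (∑ k : Fin (m₁ * m₂),
        lnorm (((σ (e.symm k).1).map fun u => (u, (0 : EuclideanSpace ℝ (Fin m)))) ++
          ((τ (e.symm k).2).map fun v => ((0 : EuclideanSpace ℝ (Fin n)), v))) *
          ‖w (α (e.symm k).1) (β (e.symm k).2)‖)
        ∈ repsIn (U₁ ×ˢ U₂) (r + s) (cross w P Q) := by
      refine ⟨m₁ * m₂, _, _, _, ?_, ?_, hcross, rfl⟩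
      · intro k
        simp only [List.length_append, List.length_map]
        exact add_le_add (hlen₁ _) (hlen₂ _)
      · intro k
        unfold Inside
        rw [dpts_cross, convexHull_prod]
        exact Set.prod_mono (hin₁ _) (hin₂ _)
    refine le_trans (BnormIn_le hmem) ?_
    have hterm : ∀ k : Fin (m₁ * m₂),
        lnorm (((σ (e.symm k).1).map fun u => (u, (0 : EuclideanSpace ℝ (Fin m)))) ++
          ((τ (e.symm k).2).map fun v => ((0 : EuclideanSpace ℝ (Fin n)), v))) *
          ‖w (α (e.symm k).1) (β (e.symm k).2)‖
          ≤ (lnorm (σ (e.symm k).1) * ‖α (e.symm k).1‖) *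
            (lnorm (τ (e.symm k).2) * ‖β (e.symm k).2‖) := by
      intro k
      rw [lnorm_append, lnorm_map_inl, lnorm_map_inr]
      calc lnorm (σ (e.symm k).1) * lnorm (τ (e.symm k).2) * ‖w (α (e.symm k).1) (β (e.symm k).2)‖
          ≤ lnorm (σ (e.symm k).1) * lnorm (τ (e.symm k).2) * (‖α (e.symm k).1‖ * ‖β (e.symm k).2‖) :=
            mul_le_mul_of_nonneg_left (hw _ _)
              (mul_nonneg (lnorm_nonneg _) (lnorm_nonneg _))
        _ = (lnorm (σ (e.symm k).1) * ‖α (e.symm k).1‖) *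
            (lnorm (τ (e.symm k).2) * ‖β (e.symm k).2‖) := by ring
    refine le_trans (Finset.sum_le_sum fun k _ => hterm k) ?_
    rw [Equiv.sum_comp e.symm (fun ij : Fin m₁ × Fin m₂ =>
      (lnorm (σ ij.1) * ‖α ij.1‖) * (lnorm (τ ij.2) * ‖β ij.2‖))]
    rw [Fintype.sum_prod_type, Finset.sum_mul_sum]
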